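/- For a positive integer m, the polynomial g(x) = (x − m)·∏_{i=1}^{ℓ}(x² − β_i x + m²), where β₁,…,β_ℓ are the real roots of a monic irreducible integer polynomial with all roots in (−2m, 2m), has integer coefficients and all its 2ℓ+1 roots lie on the circle |z| = m, with m being the only real root among them. -/

import Mathlib

open Polynomial

-- multiset version of scaleRoots multiplicativity
lemma multiset_scaleRoots_prod {R : Type*} [CommRing R] [NoZeroDivisors R]
    (s : Multiset (Polynomial R)) (r : R) :
    s.prod.scaleRoots r = (s.map (fun p => p.scaleRoots r)).prod := by
  induction s using Multiset.induction with
  | empty => simp [Polynomial.one_scaleRoots]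
  | cons a t ih =>
      simp [Polynomial.mul_scaleRoots_of_noZeroDivisors, ih]

lemma scaleRoots_X_sub_C {R : Type*} [CommRing R] [Nontrivial R] (c s : R) :
    (X - C c).scaleRoots s = X - C (c * s) := by
  ext i
  rcases i with _ | _ | i <;>
    simp [coeff_scaleRoots, natDegree_X_sub_C, natDegree_X, coeff_X, coeff_C, mul_comm]

lemma key_prod (m : ℝ) (Q : Polynomial ℝ) (hQ : Q.Monic)
    (hcard : Multiset.card Q.roots = Q.natDegree) :
    (Q.roots.map (fun β => X ^ 2 - C β * X + C (m ^ 2))).prod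
      = eval (X ^ 2 + C (m ^ 2)) ((Q.map C).scaleRoots X) := by
  conv_rhs => rw [← prod_multiset_X_sub_C_of_monic_of_roots_card_eq hQ hcard]
  rw [Polynomial.map_multiset_prod, Multiset.map_map, multiset_scaleRoots_prod,
    Multiset.map_map, eval_multiset_prod, Multiset.map_map]
  refine congrArg _ (Multiset.map_congr rfl fun β _ => ?_)
  simp only [Function.comp_apply, Polynomial.map_sub, map_X, map_C, scaleRoots_X_sub_C,
    eval_sub, eval_X, eval_C]
  ring

lemma abs_quad_root (m β : ℝ) (z : ℂ) (hb : β ^ 2 < 4 * m ^ 2) (hm : 0 ≤ m)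
    (hz : z ^ 2 - (β : ℂ) * z + (m : ℂ) ^ 2 = 0) : ‖z‖ = m := by
  obtain ⟨h1, h2⟩ := Complex.ext_iff.mp hz
  rw [pow_two, pow_two] at h1 h2
  simp only [Complex.add_re, Complex.sub_re, Complex.mul_re, Complex.mul_im,
    Complex.add_im, Complex.sub_im, Complex.ofReal_re, Complex.ofReal_im,
    Complex.zero_re, Complex.zero_im] at h1 h2
  have key : z.re * z.re + z.im * z.im = m ^ 2 := by
    rcases eq_or_ne z.im 0 with h | h
    · exfalso; rw [h] at h1; nlinarith [sq_nonneg (2 * z.re - β)]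
    · have him : 2 * z.re - β = 0 := by
        rcases mul_eq_zero.mp (show z.im * (2 * z.re - β) = 0 by linear_combination h2) with
          h' | h'
        · exact absurd h' h
        · exact h'
      have hβ : β = 2 * z.re := by linarith
      rw [hβ] at h1
      nlinarith [h1]
  rw [Complex.norm_def, Complex.normSq_apply, key, Real.sqrt_sq hm]

lemma map_poly_eval {R S : Type*} [CommSemiring R] [CommSemiring S] (f : R →+* S)
    (Q : Polynomial (Polynomial R)) (A : Polynomial R) :
    (Q.eval A).map f = (Q.map (mapRingHom f)).eval (A.map f) := by
  have h : Q.eval A = Q.eval₂ (RingHom.id _) A := rfl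
  rw [eval_map, ← coe_mapRingHom f, h, hom_eval₂, RingHom.comp_id, coe_mapRingHom]

theorem stmt13 (m : ℕ) (hm : 1 ≤ m) (ℓ : ℕ) (hℓ : 1 ≤ ℓ) (P : Polynomial ℤ)
    (hmonic : P.Monic) (hirr : Irreducible P) (hdeg : P.natDegree = ℓ)
    (hreal : (P.map (Int.castRingHom ℝ)).roots.card = ℓ)
    (hbound : ∀ β ∈ (P.map (Int.castRingHom ℝ)).roots, β ^ 2 < 4 * m ^ 2)
    (g : Polynomial ℝ)
    (hg : g = (X - C (m : ℝ)) * ((P.map (Int.castRingHom ℝ)).roots.map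
      (fun β => X ^ 2 - C β * X + C ((m : ℝ) ^ 2))).prod) :
    (∃ G : Polynomial ℤ, G.map (Int.castRingHom ℝ) = g) ∧
    (g.map (algebraMap ℝ ℂ)).roots.card = 2 * ℓ + 1 ∧
    (∀ z ∈ (g.map (algebraMap ℝ ℂ)).roots, ‖z‖ = m) ∧
    g.roots = {(m : ℝ)} := by
  set f := Int.castRingHom ℝ with hf
  set PR := P.map f with hPR
  have hPRm : PR.Monic := hmonic.map f
  have hPRdeg : PR.natDegree = ℓ := by rw [hPR, hmonic.natDegree_map, hdeg]
  have hcard : Multiset.card PR.roots = PR.natDegree := by rw [hreal, hPRdeg]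
  have hqm : ∀ β : ℝ, (X ^ 2 - C β * X + C ((m : ℝ) ^ 2)).Monic := by
    intro β
    have h : X ^ 2 - C β * X + C ((m : ℝ) ^ 2)
        = X ^ 2 + (C (-β) * X + C ((m : ℝ) ^ 2)) := by rw [map_neg]; ring
    rw [h]
    exact monic_X_pow_add (lt_of_le_of_lt (degree_linear_le) (by norm_num))
  have hqdeg : ∀ β : ℝ, (X ^ 2 - C β * X + C ((m : ℝ) ^ 2)).natDegree = 2 := by
    intro β
    have h : X ^ 2 - C β * X + C ((m : ℝ) ^ 2)
        = C 1 * X ^ 2 + C (-β) * X + C ((m : ℝ) ^ 2) := by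
      rw [map_neg, map_one]; ring
    rw [h]; exact natDegree_quadratic one_ne_zero
  have hgm : g.Monic := by
    rw [hg]
    exact (monic_X_sub_C _).mul
      (monic_multiset_prod_of_monic _ _ fun β _ => hqm β)
  have hdegg : g.natDegree = 2 * ℓ + 1 := by
    rw [hg, natDegree_mul (X_sub_C_ne_zero _)
      (monic_multiset_prod_of_monic _ _ fun β _ => hqm β).ne_zero, natDegree_X_sub_C,
      natDegree_multiset_prod_of_monic _ (fun q hq => by
        obtain ⟨β, _, rfl⟩ := Multiset.mem_map.mp hq
        exact hqm β), Multiset.map_map]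
    have : (PR.roots.map (natDegree ∘ fun β => X ^ 2 - C β * X + C ((m : ℝ) ^ 2)))
        = PR.roots.map (fun _ => 2) := Multiset.map_congr rfl fun β _ => hqdeg β
    rw [this, Multiset.map_const', Multiset.sum_replicate, hreal, smul_eq_mul]
    ring
  refine ⟨?_, ?_, ?_, ?_⟩
  · -- integer coefficients
    refine ⟨(X - C (m : ℤ)) * eval ((X : Polynomial ℤ) ^ 2 + C ((m : ℤ) ^ 2))
      ((P.map (C : ℤ →+* Polynomial ℤ)).scaleRoots X), ?_⟩
    rw [Polynomial.map_mul, hg, key_prod ((m : ℕ) : ℝ) PR hPRm hcard]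
    have e3 : ((P.map (C : ℤ →+* Polynomial ℤ)).scaleRoots X).map (mapRingHom f)
        = (PR.map (C : ℝ →+* Polynomial ℝ)).scaleRoots X := by
      rw [map_scaleRoots]
      · congr 1
        · rw [Polynomial.map_map, hPR, Polynomial.map_map]
          congr 1
          ext n : 1
          simp [f]
        · simp
      · rw [(hmonic.map (C : ℤ →+* Polynomial ℤ)).leadingCoeff]
        simp
    rw [map_poly_eval, e3]
    congr 1
    · simp [f]
    · congr 1
      simp [f]
  · -- number of complex roots
    rw [← (IsAlgClosed.splits (g.map (algebraMap ℝ ℂ))).natDegree_eq_card_roots, natDegree_map, hdegg]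
  · -- all complex roots on circle
    intro z hz
    have hz0 : (g.map (algebraMap ℝ ℂ)).eval z = 0 := isRoot_of_mem_roots hz
    rw [hg] at hz0
    simp only [Polynomial.map_mul, Polynomial.map_sub, Polynomial.map_add,
      Polynomial.map_pow, map_X, map_C, Polynomial.map_multiset_prod, Multiset.map_map,
      eval_mul, eval_sub, eval_add, eval_pow, eval_X, eval_C, eval_multiset_prod,
      Complex.coe_algebraMap, Function.comp_apply] at hz0
    rcases mul_eq_zero.mp hz0 with h | h
    · rw [sub_eq_zero.mp h]
      simp [Complex.norm_real, abs_of_nonneg (by positivity : (0:ℝ) ≤ (m:ℝ))]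
    · obtain ⟨β, hβ, hβ0⟩ := Multiset.mem_map.mp (Multiset.prod_eq_zero_iff.mp h)
      exact abs_quad_root ((m:ℕ):ℝ) β z (hbound β hβ) (by positivity)
        (by rw [← hβ0]; push_cast; ring)
  · -- real roots
    have hprodne : (PR.roots.map
        (fun β => X ^ 2 - C β * X + C ((m : ℝ) ^ 2))).prod ≠ 0 :=
      (monic_multiset_prod_of_monic _ _ fun β _ => hqm β).ne_zero
    rw [hg, roots_mul (mul_ne_zero (X_sub_C_ne_zero _) hprodne), roots_X_sub_C]
    have hzero : ((PR.roots.map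
        (fun β => X ^ 2 - C β * X + C ((m : ℝ) ^ 2))).prod).roots = 0 := by
      rw [roots_multiset_prod _ (by
        intro h0
        obtain ⟨β, _, hβ0⟩ := Multiset.mem_map.mp h0
        exact (hqm β).ne_zero hβ0)]
      refine Multiset.sum_eq_zero ?_
      intro r hr
      rw [Multiset.map_map] at hr
      obtain ⟨β, hβ, rfl⟩ := Multiset.mem_map.mp hr
      refine Multiset.eq_zero_of_forall_notMem fun x hx => ?_
      have hx0 : (X ^ 2 - C β * X + C ((m : ℝ) ^ 2)).eval x = 0 :=
        isRoot_of_mem_roots hx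
      simp only [eval_add, eval_sub, eval_pow, eval_mul, eval_X, eval_C] at hx0
      nlinarith [sq_nonneg (2 * x - β), hbound β hβ]
    rw [hzero, add_zero]
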